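/- Let q be a finite one-dimensional word. There exists an aperiodic (not eventually periodic in the sense of having no period) right-infinite q-coverable word if and only if the primitive root of q has a non-empty border. -/

import Mathlib

def lpow {α : Type*} (w : List α) (n : ℕ) : List α :=
  (List.replicate n w).flatten

/-- `q` occurs in the right-infinite word `w` at position `a`. -/
def OccursAt {α : Type*} (q : List α) (w : ℕ → α) (a : ℕ) : Prop :=
  ∀ j : Fin q.length, w (a + j) = q.get j

/-- Every position of `w` lies inside some occurrence of `q`. -/
def Covers {α : Type*} (q : List α) (w : ℕ → α) : Prop :=
  ∀ i : ℕ, ∃ a : ℕ, a ≤ i ∧ i < a + q.length ∧ OccursAt q w a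

/-- A right-infinite word is aperiodic if it has no period `p > 0`. -/
def Aperiodic {α : Type*} (w : ℕ → α) : Prop :=
  ¬ ∃ p : ℕ, 0 < p ∧ ∀ i : ℕ, w (i + p) = w i

namespace StmtAux
variable {α : Type*}

lemma lpow_length (w : List α) (n : ℕ) : (lpow w n).length = n * w.length := by
  simp [lpow]

lemma lpow_succ (w : List α) (n : ℕ) : lpow w (n+1) = w ++ lpow w n := by
  simp [lpow, List.replicate_succ]

lemma lpow_add (w : List α) (m n : ℕ) : lpow w (m+n) = lpow w m ++ lpow w n := by
  unfold lpow
  rw [List.replicate_add, List.flatten_append]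

lemma lpow_getElem (w : List α) (hw : 0 < w.length) (n i : ℕ) (h : i < n * w.length) :
    (lpow w n)[i]'(by rw [lpow_length]; exact h) = w[i % w.length]'(Nat.mod_lt _ hw) := by
  induction n generalizing i with
  | zero => omega
  | succ n ih =>
    rw [List.getElem_of_eq (lpow_succ w n) _]
    by_cases hi : i < w.length
    · rw [List.getElem_append_left hi]
      congr 1
      exact (Nat.mod_eq_of_lt hi).symm
    · push_neg at hi
      rw [List.getElem_append_right hi]
      have h2 : i - w.length < n * w.length := by
        rw [Nat.succ_mul] at h
        omega
      rw [ih (i - w.length) h2]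
      congr 1
      conv_rhs => rw [show i = (i - w.length) + w.length by omega]
      rw [Nat.add_mod_right]

lemma lpow_lpow (z : List α) (m k : ℕ) : lpow (lpow z m) k = lpow z (m * k) := by
  induction k with
  | zero => simp [lpow]
  | succ k ih =>
    rw [lpow_succ, ih, Nat.mul_succ, Nat.add_comm, lpow_add]

end StmtAux

namespace StmtAux
variable {α : Type*}

lemma elem_eq (l : List α) {i j : ℕ} (hij : i = j) (hi : i < l.length) :
    l[i] = l[j]'(hij ▸ hi) := by subst hij; rfl

lemma rotation {r : List α} {t : ℕ} (ht : 0 < t) (hte : t < r.length)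
    (h : ∀ x (_ : x < r.length), r[x] = r[(x + t) % r.length]'(Nat.mod_lt _ (by omega))) :
    ∃ z : List α, ∃ m : ℕ, 2 ≤ m ∧ z.length < r.length ∧ r = lpow z m := by
  have he0 : 0 < r.length := by omega
  set e := r.length with he
  have hA : ∀ (n x : ℕ) (_ : x < e), r[x]'(by omega) = r[(x + n * t) % e]'(Nat.mod_lt _ he0) := by
    intro n
    induction n with
    | zero =>
      intro x hx
      exact elem_eq r (by rw [Nat.zero_mul, Nat.add_zero, Nat.mod_eq_of_lt hx]) hx
    | succ n ih =>
      intro x hx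
      rw [ih x hx, h ((x + n * t) % e) (Nat.mod_lt _ he0)]
      refine elem_eq r ?_ _
      rw [Nat.mod_add_mod]
      congr 1
      ring
  set g := Nat.gcd t e with hg
  have hg0 : 0 < g := Nat.gcd_pos_of_pos_left _ ht
  have hgt : g ≤ t := Nat.gcd_le_left _ ht
  have hgdvd : g ∣ e := Nat.gcd_dvd_right t e
  obtain ⟨n, hn⟩ : ∃ n : ℕ, (n * t) % e = g % e := by
    have key : (g : ℤ) = t * Nat.gcdA t e + e * Nat.gcdB t e := Nat.gcd_eq_gcd_ab t e
    refine ⟨(Nat.gcdA t e % e).toNat, ?_⟩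
    have hene : (e : ℤ) ≠ 0 := by exact_mod_cast he0.ne'
    have hcast : ((Nat.gcdA t e % e).toNat : ℤ) = Nat.gcdA t e % e :=
      Int.toNat_of_nonneg (Int.emod_nonneg _ hene)
    have hz : (((Nat.gcdA t e % e).toNat * t : ℕ) : ℤ) % e = ((g % e : ℕ) : ℤ) := by
      push_cast [hcast]
      have h1 : (Nat.gcdA t e % e * t) % e = (Nat.gcdA t e * t) % e := by
        conv_lhs => rw [Int.mul_emod]
        conv_rhs => rw [Int.mul_emod]
        rw [Int.emod_emod_of_dvd _ dvd_rfl]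
      rw [h1]
      have h2 : (Nat.gcdA t e * t : ℤ) = g + e * (-(Nat.gcdB t e)) := by
        rw [key]; ring
      rw [h2, Int.add_mul_emod_self_left]
    have := hz
    rw [show (((Nat.gcdA t e % e).toNat * t : ℕ) : ℤ) % (e : ℤ)
        = ((((Nat.gcdA t e % e).toNat * t) % e : ℕ) : ℤ) by push_cast; ring_nf] at this
    exact_mod_cast this
  have hge : g < e := by omega
  have hC : ∀ x (_ : x < e), r[x]'(by omega) = r[(x + g) % e]'(Nat.mod_lt _ he0) := by
    intro x hx
    rw [hA n x hx]
    refine elem_eq r ?_ _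
    conv_lhs => rw [Nat.add_mod, hn, ← Nat.add_mod]
  have hD : ∀ x (_ : x < e), r[x]'(by omega) = r[x % g]'(by have := Nat.mod_lt x hg0; omega) := by
    intro x
    induction x using Nat.strong_induction_on with
    | _ x ih =>
      intro hx
      by_cases hxg : x < g
      · exact elem_eq r (Nat.mod_eq_of_lt hxg).symm hx
      · push_neg at hxg
        have h1 : x - g < e := by omega
        have h2 := hC (x - g) h1
        have h3 : (x - g + g) % e = x := by
          rw [Nat.sub_add_cancel hxg, Nat.mod_eq_of_lt hx]
        rw [elem_eq r h3 _] at h2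
        rw [← h2, ih (x - g) (by omega) h1]
        exact elem_eq r (Nat.mod_eq_sub_mod hxg).symm _
  obtain ⟨m, hm⟩ := hgdvd
  have hm2 : 2 ≤ m := by
    rcases Nat.lt_or_ge m 2 with hlt | hge2
    · interval_cases m <;> omega
    · exact hge2
  refine ⟨r.take g, m, hm2, by rw [List.length_take]; omega, ?_⟩
  have hlen : (r.take g).length = g := by rw [List.length_take]; omega
  have hmg : g * m = m * g := Nat.mul_comm _ _
  apply List.ext_getElem
  · rw [lpow_length, hlen]; omega
  · intro i h1 h2
    rw [lpow_length, hlen] at h2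
    have hig : i % g < g := Nat.mod_lt _ hg0
    have h5 : i < e := by omega
    have h6 := lpow_getElem (r.take g) (by omega) m i (by rw [hlen]; omega)
    calc r[i] = r[i % g]'(by omega) := hD i h5
      _ = (r.take g)[i % g]'(by rw [hlen]; omega) := (List.getElem_take (xs := r)).symm
      _ = (r.take g)[i % (r.take g).length]'(by rw [hlen]; omega) :=
            elem_eq _ (by rw [hlen]) _
      _ = (lpow (r.take g) m)[i]'(by rw [lpow_length, hlen]; omega) := h6.symm

lemma primitive_no_rotation (q r : List α) (hroot : ∃ k : ℕ, 0 < k ∧ q = lpow r k)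
    (hmin : ∀ (s : List α) (k : ℕ), 0 < k → q = lpow s k → r.length ≤ s.length)
    {t : ℕ} (ht : 0 < t) (hte : t < r.length)
    (h : ∀ x (_ : x < r.length), r[x] = r[(x + t) % r.length]'(Nat.mod_lt _ (by omega))) :
    False := by
  obtain ⟨z, m, hm2, hzlt, hzr⟩ := rotation ht hte h
  obtain ⟨k, hk, hqr⟩ := hroot
  have hq2 : q = lpow z (m * k) := by rw [hqr, hzr, lpow_lpow]
  have := hmin z (m * k) (by positivity) hq2
  omega

end StmtAux

namespace StmtAux

def Ept (e β Q : ℕ) : ℕ → ℕ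
  | 0 => Q - β
  | j + 1 => Ept e β Q j + (j + 1) * e + (Q - β)

def nuf (e β Q i : ℕ) : ℕ :=
  ((Finset.range (i + 1)).filter (fun j => Ept e β Q j ≤ i)).card

variable {e β Q : ℕ} (he : 0 < e) (hβ : 0 < β) (hβe : β < e) (heQ : e ≤ Q)

include hβe heQ in
lemma Ept_ge : ∀ j, j + 1 ≤ Ept e β Q j := by
  intro j
  induction j with
  | zero => show 0 + 1 ≤ Q - β; omega
  | succ j ih =>
    show j + 1 + 1 ≤ Ept e β Q j + (j + 1) * e + (Q - β)
    omega

include hβe heQ in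
lemma Ept_lt (j : ℕ) : Ept e β Q j < Ept e β Q (j + 1) := by
  show Ept e β Q j < Ept e β Q j + (j + 1) * e + (Q - β)
  have : 1 * e ≤ (j + 1) * e := Nat.mul_le_mul_right _ (by omega)
  omega

include hβe heQ in
lemma Ept_mono : StrictMono (Ept e β Q) :=
  strictMono_nat_of_lt_succ (fun j => Ept_lt hβe heQ j)

include hβe heQ in
lemma nuf_eq (i j : ℕ) (hlow : ∀ j' < j, Ept e β Q j' ≤ i) (hhigh : i < Ept e β Q j) :
    nuf e β Q i = j := by
  unfold nuf
  have hset : (Finset.range (i + 1)).filter (fun j' => Ept e β Q j' ≤ i) = Finset.range j := by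
    ext j'
    simp only [Finset.mem_filter, Finset.mem_range]
    constructor
    · rintro ⟨_, hle⟩
      by_contra hge
      push_neg at hge
      exact absurd hle (not_le.2 (lt_of_lt_of_le hhigh ((Ept_mono hβe heQ).monotone hge)))
    · intro hj'
      have h1 := hlow j' hj'
      have h2 := Ept_ge hβe heQ j'
      exact ⟨by omega, h1⟩
  rw [hset, Finset.card_range]

include hβe heQ in
lemma Ept_phase (heQd : e ∣ Q) : ∀ j, e ∣ Ept e β Q j + (j + 1) * β := by
  intro j
  induction j with
  | zero =>
    show e ∣ Q - β + 1 * β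
    have : Q - β + 1 * β = Q := by omega
    rw [this]; exact heQd
  | succ j ih =>
    show e ∣ Ept e β Q j + (j + 1) * e + (Q - β) + (j + 1 + 1) * β
    have hrw : Ept e β Q j + (j + 1) * e + (Q - β) + (j + 1 + 1) * β
        = (Ept e β Q j + (j + 1) * β) + ((j + 1) * e + Q) := by
      have h1 : (j + 1 + 1) * β = (j + 1) * β + β := by ring
      omega
    rw [hrw]
    exact dvd_add ih (dvd_add (Dvd.intro_left _ rfl) heQd)

end StmtAux

namespace StmtAux
section Word
variable {α : Type*} (r q : List α) (β : ℕ) (he : 0 < r.length)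

/-- The candidate aperiodic covered word. -/
def wrd (i : ℕ) : α :=
  r.get ⟨(i + β * nuf r.length β q.length i) % r.length, Nat.mod_lt _ he⟩

variable (hβ : 0 < β) (hβe : β < r.length) (heQ : r.length ≤ q.length)
    (heQd : r.length ∣ q.length)
    (hqe : ∀ m (hm : m < q.length), q.get ⟨m, hm⟩ = r[m % r.length]'(Nat.mod_lt _ he))
    (hborder : ∀ x (_ : x < β), r[x]'(by omega) = r[r.length - β + x]'(by omega))

include hβ hβe heQ heQd hqe hborder in
lemma occ_key (a j : ℕ) (hlow : ∀ j' < j, Ept r.length β q.length j' ≤ a)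
    (hupp : a + q.length ≤ Ept r.length β q.length j + β)
    (hph : r.length ∣ a + j * β) :
    OccursAt q (wrd r q β he) a := by
  rintro ⟨m, hm⟩
  show wrd r q β he (a + m) = q.get ⟨m, hm⟩
  rw [hqe m hm]
  unfold wrd
  simp only [List.get_eq_getElem]
  by_cases hlt : a + m < Ept r.length β q.length j
  · have hν : nuf r.length β q.length (a + m) = j :=
      nuf_eq hβe heQ _ j (fun j' hj' => le_trans (hlow j' hj') (by omega)) hlt
    refine elem_eq r ?_ _
    rw [hν]
    obtain ⟨u, hu⟩ := hph
    have h1 : a + m + β * j = r.length * u + m := by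
      have : j * β = β * j := Nat.mul_comm _ _
      omega
    rw [h1, Nat.mul_add_mod]
  · push_neg at hlt
    have hdiff : Ept r.length β q.length j + 1 * r.length
        ≤ Ept r.length β q.length (j + 1) := by
      show Ept r.length β q.length j + 1 * r.length
          ≤ Ept r.length β q.length j + (j + 1) * r.length + (q.length - β)
      have : 1 * r.length ≤ (j + 1) * r.length := Nat.mul_le_mul_right _ (by omega)
      omega
    have hν : nuf r.length β q.length (a + m) = j + 1 := by
      refine nuf_eq hβe heQ _ (j + 1) ?_ (by omega)
      intro j' hj'
      rcases Nat.lt_or_ge j' j with h | h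
      · exact le_trans (hlow j' h) (by omega)
      · have : j' = j := by omega
        subst this; omega
    set m' : ℕ := a + m - Ept r.length β q.length j with hm'def
    have hm'β : m' < β := by omega
    obtain ⟨u, hu⟩ := Ept_phase hβe heQ heQd j
    have hfirst : (a + m + β * (j + 1)) % r.length = m' := by
      have h1 : a + m + β * (j + 1) = r.length * u + m' := by
        have : (j + 1) * β = β * (j + 1) := Nat.mul_comm _ _
        omega
      rw [h1, Nat.mul_add_mod, Nat.mod_eq_of_lt (by omega)]
    obtain ⟨u', hu'⟩ := hph
    have haE : a ≤ Ept r.length β q.length j := by omega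
    have hDβ : r.length ∣ (Ept r.length β q.length j - a) + β := by
      have h2 : (a + j * β) + ((Ept r.length β q.length j - a) + β)
          = Ept r.length β q.length j + (j + 1) * β := by
        have : (j + 1) * β = j * β + β := by ring
        omega
      have h3 : r.length ∣ (a + j * β) + ((Ept r.length β q.length j - a) + β) := by
        rw [h2, hu]; exact Dvd.intro _ rfl
      have h5 := Nat.dvd_sub h3 ⟨u', hu'⟩
      have h4 : (a + j * β) + ((Ept r.length β q.length j - a) + β) - (a + j * β)
          = (Ept r.length β q.length j - a) + β := by omega
      rwa [h4] at h5
    obtain ⟨v, hv⟩ := hDβ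
    have hv1 : 1 ≤ v := by
      rcases Nat.eq_zero_or_pos v with h | h
      · subst h; omega
      · exact h
    have hsecond : m % r.length = r.length - β + m' := by
      have hev : r.length * v = r.length * (v - 1) + r.length := by
        have hveq : v = (v - 1) + 1 := by omega
        conv_lhs => rw [hveq]
        rw [Nat.mul_add, Nat.mul_one]
      have h1 : m = r.length * (v - 1) + (r.length - β + m') := by omega
      rw [h1, Nat.mul_add_mod, Nat.mod_eq_of_lt (by omega)]
    have hidx : (a + m + β * nuf r.length β q.length (a + m)) % r.length = m' := by
      rw [hν]; exact hfirst
    refine (elem_eq r hidx _).trans ?_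
    refine (hborder m' hm'β).trans ?_
    exact (elem_eq r hsecond _).symm

include hβ hβe heQ heQd hqe hborder in
lemma covers_key : Covers q (wrd r q β he) := by
  intro i
  have hex : ∃ jj, i < Ept r.length β q.length jj :=
    ⟨i, lt_of_lt_of_le (Nat.lt_succ_self i) (Ept_ge hβe heQ i)⟩
  obtain ⟨j, hj1, hj2⟩ : ∃ j, i < Ept r.length β q.length j ∧
      ∀ j' < j, Ept r.length β q.length j' ≤ i :=
    ⟨Nat.find hex, Nat.find_spec hex, fun j' h => le_of_not_gt (Nat.find_min hex h)⟩
  have hE0 : Ept r.length β q.length 0 = q.length - β := rfl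
  have hEj0 : q.length - β ≤ Ept r.length β q.length j := by
    rcases Nat.eq_zero_or_pos j with h | h
    · rw [h]; omega
    · exact le_trans (le_of_eq hE0.symm) (((Ept_mono hβe heQ).monotone) (by omega))
  by_cases hcase : Ept r.length β q.length j ≤ i + (q.length - β)
  · refine ⟨Ept r.length β q.length j - (q.length - β), by omega, by omega, ?_⟩
    refine occ_key r q β he hβ hβe heQ heQd hqe hborder _ j ?_ (by omega) ?_
    · intro j' hj'
      obtain ⟨j0, hjeq⟩ : ∃ j0, j = j0 + 1 := ⟨j - 1, by omega⟩
      have hsucc : Ept r.length β q.length (j0 + 1)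
          = Ept r.length β q.length j0 + (j0 + 1) * r.length + (q.length - β) := rfl
      have h1 : Ept r.length β q.length j' ≤ Ept r.length β q.length j0 :=
        ((Ept_mono hβe heQ).monotone) (by omega)
      rw [hjeq]
      rw [hjeq] at hEj0
      omega
    · obtain ⟨u, hu⟩ := Ept_phase hβe heQ heQd j
      obtain ⟨w', hw'⟩ := heQd
      have h1 : Ept r.length β q.length j - (q.length - β) + j * β + q.length
          = r.length * u := by
        have : (j + 1) * β = j * β + β := by ring
        omega
      have h3 := Nat.dvd_sub (⟨u, h1⟩ : r.length ∣ _) (⟨w', hw'⟩ : r.length ∣ q.length)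
      have h4 : Ept r.length β q.length j - (q.length - β) + j * β + q.length - q.length
          = Ept r.length β q.length j - (q.length - β) + j * β := by omega
      rwa [h4] at h3
  · push_neg at hcase
    have hj0 : j ≠ 0 := by
      intro h
      rw [h, hE0] at hcase
      omega
    obtain ⟨j0, hjeq⟩ : ∃ j0, j = j0 + 1 := ⟨j - 1, by omega⟩
    subst hjeq
    have hsucc : Ept r.length β q.length (j0 + 1)
        = Ept r.length β q.length j0 + (j0 + 1) * r.length + (q.length - β) := rfl
    have hiE : Ept r.length β q.length j0 ≤ i := hj2 j0 (by omega)
    have hdm := Nat.div_add_mod (i - Ept r.length β q.length j0) r.length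
    have hmlt : (i - Ept r.length β q.length j0) % r.length < r.length := Nat.mod_lt _ he
    set u := (i - Ept r.length β q.length j0) / r.length with hudef
    have hcomm : r.length * u = u * r.length := Nat.mul_comm _ _
    have hai : Ept r.length β q.length j0 + u * r.length ≤ i := by omega
    have hia : i < Ept r.length β q.length j0 + u * r.length + r.length := by omega
    have huj : u < j0 + 1 := by
      have h1 : u * r.length < (j0 + 1) * r.length := by omega
      exact Nat.lt_of_mul_lt_mul_right h1
    have huj0 : u * r.length ≤ j0 * r.length := Nat.mul_le_mul_right _ (by omega)
    refine ⟨Ept r.length β q.length j0 + u * r.length, hai, by omega, ?_⟩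
    refine occ_key r q β he hβ hβe heQ heQd hqe hborder _ (j0 + 1) ?_ ?_ ?_
    · intro j' hj'
      have h1 : Ept r.length β q.length j' ≤ Ept r.length β q.length j0 :=
        ((Ept_mono hβe heQ).monotone) (by omega)
      omega
    · have h1 : (j0 + 1) * r.length = j0 * r.length + r.length := by ring
      omega
    · obtain ⟨w', hw'⟩ := Ept_phase hβe heQ heQd j0
      refine ⟨w' + u, ?_⟩
      have h2 : r.length * (w' + u) = r.length * w' + r.length * u := by ring
      omega
end Word
end StmtAux

namespace StmtAux
section Aper
variable {α : Type*} (r q : List α) (β : ℕ) (he : 0 < r.length)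
    (hβ : 0 < β) (hβe : β < r.length) (heQ : r.length ≤ q.length)
    (heQd : r.length ∣ q.length)

include hβ hβe heQ heQd in
lemma aper_key (p : ℕ) (hp : 0 < p)
    (hper : ∀ i, wrd r q β he (i + p) = wrd r q β he i) :
    ∀ x (_ : x < r.length),
      r[x] = r[(x + (r.length - β)) % r.length]'(Nat.mod_lt _ he) := by
  have hmul : ∀ n i, wrd r q β he (i + n * p) = wrd r q β he i := by
    intro n
    induction n with
    | zero => intro i; rw [Nat.zero_mul, Nat.add_zero]
    | succ n ih =>
      intro i
      have h1 : i + (n + 1) * p = (i + n * p) + p := by ring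
      rw [h1, hper (i + n * p), ih i]
  intro x hx
  have hcomm : r.length * p = p * r.length := Nat.mul_comm _ _
  have hsucc : Ept r.length β q.length (p + 1)
      = Ept r.length β q.length p + (p + 1) * r.length + (q.length - β) := rfl
  have hsucc2 : Ept r.length β q.length (p + 2)
      = Ept r.length β q.length (p + 1) + (p + 2) * r.length + (q.length - β) := rfl
  have hm1 : (p + 1) * r.length = p * r.length + r.length := by ring
  have hm2 : (p + 2) * r.length = p * r.length + 2 * r.length := by ring
  have hrp : r.length * 1 ≤ r.length * p := Nat.mul_le_mul_left _ hp
  -- y : position in phase-(p+1) region with y + r.length * p in phase-(p+2) region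
  set y := Ept r.length β q.length (p + 1) - r.length * p + x with hydef
  have hyE : y + r.length * p = Ept r.length β q.length (p + 1) + x := by omega
  have hνy : nuf r.length β q.length y = p + 1 := by
    refine nuf_eq hβe heQ _ _ ?_ (by omega)
    intro j' hj'
    have h1 : Ept r.length β q.length j' ≤ Ept r.length β q.length p :=
      ((Ept_mono hβe heQ).monotone) (by omega)
    omega
  have hν2 : nuf r.length β q.length (y + r.length * p) = p + 2 := by
    refine nuf_eq hβe heQ _ _ ?_ (by omega)
    intro j' hj'
    have h1 : Ept r.length β q.length j' ≤ Ept r.length β q.length (p + 1) :=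
      ((Ept_mono hβe heQ).monotone) (by omega)
    omega
  obtain ⟨u, hu⟩ := Ept_phase hβe heQ heQd (p + 1)
  have hA : (y + r.length * p + β * nuf r.length β q.length (y + r.length * p)) % r.length
      = x := by
    rw [hν2]
    have h1 : y + r.length * p + β * (p + 2) = r.length * u + x := by
      have h2 : (p + 1 + 1) * β = β * (p + 2) := by ring
      omega
    rw [h1, Nat.mul_add_mod, Nat.mod_eq_of_lt hx]
  have hB : (y + β * nuf r.length β q.length y) % r.length
      = (x + (r.length - β)) % r.length := by
    rw [hνy]
    refine Nat.ModEq.add_right_cancel' (β + r.length * p) ?_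
    have h1 : y + β * (p + 1) + (β + r.length * p) = r.length * u + x := by
      have h2 : (p + 1 + 1) * β = β * (p + 1) + β := by ring
      omega
    have h2 : x + (r.length - β) + (β + r.length * p) = r.length * (1 + p) + x := by
      have h3 : r.length * (1 + p) = r.length + r.length * p := by ring
      omega
    rw [h1, h2]
    show (r.length * u + x) % r.length = (r.length * (1 + p) + x) % r.length
    rw [Nat.mul_add_mod, Nat.mul_add_mod]
  have key := hmul r.length y
  unfold wrd at key
  simp only [List.get_eq_getElem] at key
  calc r[x] = r[(y + r.length * p
        + β * nuf r.length β q.length (y + r.length * p)) % r.length]'(Nat.mod_lt _ he) :=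
        (elem_eq r hA _).symm
    _ = r[(y + β * nuf r.length β q.length y) % r.length]'(Nat.mod_lt _ he) := key
    _ = r[(x + (r.length - β)) % r.length]'(Nat.mod_lt _ he) := elem_eq r hB _

end Aper
end StmtAux

open StmtAux in
theorem stmt2 {α : Type*} (q r : List α) (hq : q ≠ [])
    (hroot : ∃ k : ℕ, 0 < k ∧ q = lpow r k)
    (hmin : ∀ (s : List α) (k : ℕ), 0 < k → q = lpow s k → r.length ≤ s.length) :
    (∃ w : ℕ → α, Covers q w ∧ Aperiodic w) ↔
      ∃ b : List α, b ≠ [] ∧ b ≠ r ∧ b <+: r ∧ b <:+ r := by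
  obtain ⟨k, hk, hqr⟩ := id hroot
  have he : 0 < r.length := by
    rcases Nat.eq_zero_or_pos r.length with h | h
    · exfalso; apply hq; rw [hqr, List.length_eq_zero_iff.mp h]; simp [lpow]
    · exact h
  have hQlen : q.length = k * r.length := by rw [hqr, lpow_length]
  have heQ : r.length ≤ q.length := by
    rw [hQlen]; exact Nat.le_mul_of_pos_left _ hk
  have heQd : r.length ∣ q.length := ⟨k, by rw [hQlen]; ring⟩
  have hqe : ∀ m (hm : m < q.length),
      q.get ⟨m, hm⟩ = r[m % r.length]'(Nat.mod_lt _ he) := by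
    intro m hm
    have hm' : m < k * r.length := by omega
    simp only [List.get_eq_getElem]
    rw [List.getElem_of_eq hqr, lpow_getElem r he k m hm']
  have hqe' : ∀ m (hm : m < q.length),
      q[m]'hm = r[m % r.length]'(Nat.mod_lt _ he) := by
    intro m hm
    have h1 := hqe m hm
    simpa [List.get_eq_getElem] using h1
  constructor
  · -- forward: aperiodic covered word gives a border
    rintro ⟨w, hcov, hap⟩
    by_contra hnob
    push_neg at hnob
    apply hap
    refine ⟨r.length, he, ?_⟩
    -- occurrences are congruent mod r.length
    have F1 : ∀ a a', OccursAt q w a → OccursAt q w a' → a ≤ a' → a' ≤ a + q.length →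
        a % r.length = a' % r.length := by
      intro a a' ho ho' haa hQa
      have had : a' = a + (a' - a) := by omega
      set d := a' - a with hd
      suffices hdd : r.length ∣ d by
        obtain ⟨c, hc⟩ := hdd
        rw [had, hc, Nat.mul_comm]
        exact (Nat.add_mul_mod_self_right _ _ _).symm
      by_cases hdQ : d = q.length
      · rw [hdQ]; exact heQd
      · have hdlt : d < q.length := by omega
        set ℓ := q.length - d with hldef
        have hℓ : 0 < ℓ := by omega
        have key : ∀ m (hm : m < ℓ), q[d + m]'(by omega) = q[m]'(by omega) := by
          intro m hm
          have h1 : w (a + (d + m)) = q[d + m]'(by omega) := ho ⟨d + m, by omega⟩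
          have h2 : w (a' + m) = q[m]'(by omega) := ho' ⟨m, by omega⟩
          rw [show a + (d + m) = a' + m from by omega] at h1
          exact h1.symm.trans h2
        have keyr : ∀ m (hm : m < ℓ),
            r[(d + m) % r.length]'(Nat.mod_lt _ he) = r[m % r.length]'(Nat.mod_lt _ he) := by
          intro m hm
          have h1 := key m hm
          rw [hqe' (d + m) (by omega), hqe' m (by omega)] at h1
          exact h1
        by_cases ht : d % r.length = 0
        · exact Nat.dvd_of_mod_eq_zero ht
        · exfalso
          by_cases hcase : ℓ < r.length
          · -- small overlap: extract a genuine border of r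
            have hts : ∀ s (hs : s < ℓ),
                r[s]'(by omega) = r[r.length - ℓ + s]'(by omega) := by
              intro s hs
              have hds : d + s = (k - 1) * r.length + (r.length - ℓ + s) := by
                have hkk : (k - 1) * r.length + r.length = k * r.length := by
                  have hk1 : k - 1 + 1 = k := by omega
                  calc (k - 1) * r.length + r.length = (k - 1 + 1) * r.length := by ring
                    _ = k * r.length := by rw [hk1]
                omega
              have hmod : (d + s) % r.length = r.length - ℓ + s := by
                rw [hds, Nat.add_comm, Nat.add_mul_mod_self_right,
                  Nat.mod_eq_of_lt (by omega)]
              calc r[s]'(by omega) = r[s % r.length]'(Nat.mod_lt _ he) :=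
                    elem_eq r (Nat.mod_eq_of_lt (by omega)).symm _
                _ = r[(d + s) % r.length]'(Nat.mod_lt _ he) := (keyr s hs).symm
                _ = r[r.length - ℓ + s]'(by omega) := elem_eq r hmod _
            refine hnob (r.take ℓ) ?_ ?_ (List.take_prefix _ _) ?_
            · exact List.ne_nil_of_length_pos (by rw [List.length_take]; omega)
            · intro hbr
              have := congrArg List.length hbr
              rw [List.length_take] at this
              omega
            · have hdrop : r.drop (r.length - ℓ) = r.take ℓ := by
                apply List.ext_getElem
                · rw [List.length_drop, List.length_take]; omega
                · intro n h1 h2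
                  rw [List.length_drop] at h1
                  rw [List.getElem_drop, List.getElem_take]
                  exact (hts n (by omega)).symm
              rw [← hdrop]
              exact List.drop_suffix _ _
          · -- big overlap: rotation, contradicting primitivity
            push_neg at hcase
            have ht' : 0 < d % r.length := Nat.pos_of_ne_zero ht
            have htL : d % r.length < r.length := Nat.mod_lt _ he
            refine primitive_no_rotation q r hroot hmin ht' htL ?_
            intro x hx
            have hm2 : (d + x) % r.length = (x + d % r.length) % r.length := by
              have h3 := Nat.ModEq.add_left x (Nat.mod_modEq d r.length)
              calc (d + x) % r.length = (x + d) % r.length := by rw [Nat.add_comm]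
                _ = (x + d % r.length) % r.length := h3.symm
            calc r[x] = r[x % r.length]'(Nat.mod_lt _ he) :=
                  elem_eq r (Nat.mod_eq_of_lt hx).symm _
              _ = r[(d + x) % r.length]'(Nat.mod_lt _ he) := (keyr x (by omega)).symm
              _ = r[(x + d % r.length) % r.length]'(Nat.mod_lt _ he) := elem_eq r hm2 _
    -- now derive the period
    choose A hA1 hA2 hA3 using hcov
    have chain : ∀ i, A i % r.length = A 0 % r.length := by
      intro i
      induction i with
      | zero => rfl
      | succ i ih =>
        rcases le_total (A i) (A (i + 1)) with h | h
        · have h1 := F1 (A i) (A (i + 1)) (hA3 i) (hA3 (i + 1)) h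
            (by have := hA1 (i + 1); have := hA2 i; omega)
          rw [← h1]; exact ih
        · have h1 := F1 (A (i + 1)) (A i) (hA3 (i + 1)) (hA3 i) h
            (by have := hA1 i; have := hA2 (i + 1); omega)
          rw [h1]; exact ih
    have hwA : ∀ i, w i = r[(i - A i) % r.length]'(Nat.mod_lt _ he) := by
      intro i
      have hle := hA1 i
      have hlt := hA2 i
      have h1 : w (A i + (i - A i)) = q[i - A i]'(by omega) := hA3 i ⟨i - A i, by omega⟩
      rw [show A i + (i - A i) = i from by omega] at h1
      rw [h1]
      exact hqe' (i - A i) (by omega)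
    intro i
    rw [hwA (i + r.length), hwA i]
    have hc : A i % r.length = A (i + r.length) % r.length :=
      (chain i).trans (chain (i + r.length)).symm
    refine elem_eq r ?_ _
    have hle1 := hA1 i
    have hle2 := hA1 (i + r.length)
    apply Nat.ModEq.add_right_cancel' (A i + A (i + r.length))
    have e1 : (i + r.length - A (i + r.length)) + (A i + A (i + r.length))
        = (i + A i) + r.length := by omega
    have e2 : (i - A i) + (A i + A (i + r.length)) = i + A (i + r.length) := by omega
    rw [e1, e2]
    show ((i + A i) + r.length) % r.length = (i + A (i + r.length)) % r.length
    rw [Nat.add_mod_right]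
    exact Nat.ModEq.add_left i hc
  · -- backward: border gives an aperiodic covered word
    rintro ⟨b, hb0, hbr, hpre, hsuf⟩
    have hβ : 0 < b.length := List.length_pos_iff.mpr hb0
    have hβe : b.length < r.length := by
      have h1 := hpre.length_le
      rcases Nat.lt_or_ge b.length r.length with h | h
      · exact h
      · exact absurd (hpre.eq_of_length (by omega)) hbr
    have hborder : ∀ x (_ : x < b.length),
        r[x]'(by omega) = r[r.length - b.length + x]'(by omega) := by
      intro x hx
      exact (hpre.getElem hx).symm.trans (hsuf.getElem hx)
    refine ⟨wrd r q b.length he,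
      covers_key r q b.length he hβ hβe heQ heQd hqe hborder, ?_⟩
    rintro ⟨p, hp, hper⟩
    have hrot := aper_key r q b.length he hβ hβe heQ heQd p hp hper
    exact primitive_no_rotation q r hroot hmin (t := r.length - b.length)
      (by omega) (by omega) hrot
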